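/- Let N ≥ 2 be an integer, ρ1 a real number, and ρ2 a real number with −1 ≤ ρ2 < 1. Then the function t ↦ φ(N,N−1,N−1,ρ1,ρ2,t) tends to −∞ as t → −1 from the right (i.e., along t ∈ (−1,1)). -/

import Mathlib

open Filter

noncomputable section

/-- The two-layer Schur-complement quantity φ(N,n,m,ρ1,ρ2,ρ12) of the paper. -/
def phi (N n m : ℕ) (ρ1 ρ2 ρ12 : ℝ) : ℝ :=
  let D1 : ℝ := 1 + ((N : ℝ) - (n : ℝ) - 1) * ρ1
  let D2 : ℝ := D1 * (1 + ((N : ℝ) - (m : ℝ) - 1) * ρ2)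
    - ((N : ℝ) - (m : ℝ)) * ((N : ℝ) - (n : ℝ)) * ρ12 ^ 2
  (m : ℝ) * (1 + ((m : ℝ) - 1) * ρ2)
    - (m : ℝ) ^ 2 * ((N : ℝ) - (n : ℝ)) * ρ12 ^ 2 / D1
    - (m : ℝ) ^ 2 * ((N : ℝ) - (n : ℝ)) ^ 2 * ((N : ℝ) - (m : ℝ)) * ρ12 ^ 4 / (D1 * D2)
    + 2 * (m : ℝ) ^ 2 * ((N : ℝ) - (m : ℝ)) * ((N : ℝ) - (n : ℝ)) * ρ2 * ρ12 ^ 2 / D2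
    - (m : ℝ) ^ 2 * ((N : ℝ) - (m : ℝ)) * ρ2 ^ 2 * D1 / D2

theorem stmt_19 (N : ℕ) (hN : 2 ≤ N) (ρ1 ρ2 : ℝ) (h1 : -1 ≤ ρ2) (h2 : ρ2 < 1) :
    Tendsto (fun t : ℝ => phi N (N - 1) (N - 1) ρ1 ρ2 t)
      (nhdsWithin (-1 : ℝ) (Set.Ioo (-1 : ℝ) 1)) atBot := by
  set m : ℝ := ((N - 1 : ℕ) : ℝ) with hm
  have hNc : ((N - 1 : ℕ) : ℝ) = (N : ℝ) - 1 := by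
    have : (1:ℕ) ≤ N := by omega
    push_cast [Nat.cast_sub this]; ring
  have hm1 : 1 ≤ m := by
    rw [hm, hNc]
    have : (2:ℝ) ≤ (N:ℝ) := by exact_mod_cast hN
    linarith
  -- rewrite phi on the set
  have key : ∀ t ∈ Set.Ioo (-1:ℝ) 1,
      phi N (N-1) (N-1) ρ1 ρ2 t
        = (m * (1 + (m - 1) * ρ2) - m ^ 2 * t ^ 2)
          + (-(m ^ 2) * (t ^ 2 - ρ2) ^ 2) / (1 - t ^ 2) := by
    intro t ht
    have hden : (1 : ℝ) - t ^ 2 ≠ 0 := by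
      have h1t : t ^ 2 < 1 := by nlinarith [ht.1, ht.2]
      linarith
    have hNn : (N : ℝ) - m = 1 := by rw [hm, hNc]; ring
    simp only [phi, ← hm, hNn, sub_self, zero_mul, add_zero, mul_one, one_mul]
    field_simp
    ring
  rw [tendsto_congr' (eventuallyEq_of_mem self_mem_nhdsWithin key)]
  have hmem : Set.Ioo (-1:ℝ) 1 ⊆ Set.Ioi (-1:ℝ) := Set.Ioo_subset_Ioi_self
  -- first summand tends to a constant
  have hA : Tendsto (fun t : ℝ => m * (1 + (m - 1) * ρ2) - m ^ 2 * t ^ 2)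
      (nhdsWithin (-1 : ℝ) (Set.Ioo (-1 : ℝ) 1))
      (nhds (m * (1 + (m - 1) * ρ2) - m ^ 2 * (-1:ℝ) ^ 2)) := by
    apply Tendsto.mono_left _ nhdsWithin_le_nhds
    exact (tendsto_const_nhds.sub (((continuous_pow 2).tendsto _).const_mul _))
  -- second summand tends to atBot
  have hnum : Tendsto (fun t : ℝ => -(m ^ 2) * (t ^ 2 - ρ2) ^ 2)
      (nhdsWithin (-1 : ℝ) (Set.Ioo (-1 : ℝ) 1))
      (nhds (-(m ^ 2) * (((-1:ℝ)) ^ 2 - ρ2) ^ 2)) := by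
    apply Tendsto.mono_left _ nhdsWithin_le_nhds
    exact Continuous.tendsto (by continuity) _
  have hneg : (-(m ^ 2) * (((-1:ℝ)) ^ 2 - ρ2) ^ 2) < 0 := by
    have h0 : (0:ℝ) < m ^ 2 := by positivity
    nlinarith [mul_pos h0 (pow_pos (by linarith : (0:ℝ) < 1 - ρ2) 2)]
  have hdenom : Tendsto (fun t : ℝ => (1 - t ^ 2)⁻¹)
      (nhdsWithin (-1 : ℝ) (Set.Ioo (-1 : ℝ) 1)) atTop := by
    apply tendsto_inv_nhdsGT_zero.comp
    rw [tendsto_nhdsWithin_iff]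
    constructor
    · apply Tendsto.mono_left _ nhdsWithin_le_nhds
      have : Continuous (fun t : ℝ => 1 - t ^ 2) := by continuity
      have := this.tendsto (-1 : ℝ)
      simpa using this
    · filter_upwards [self_mem_nhdsWithin] with t ht
      have h1t : t ^ 2 < 1 := by nlinarith [ht.1, ht.2]
      simp only [Set.mem_Ioi]; linarith
  have hB : Tendsto (fun t : ℝ => (-(m ^ 2) * (t ^ 2 - ρ2) ^ 2) / (1 - t ^ 2))
      (nhdsWithin (-1 : ℝ) (Set.Ioo (-1 : ℝ) 1)) atBot := by
    simp only [div_eq_mul_inv]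
    exact Tendsto.neg_mul_atTop hneg hnum hdenom
  exact hA.add_atBot hB
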